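/- arXiv:1006.5892 — 2 statements merged into one kernel-verified Lean document; each statement's English description precedes it below -/
import Mathlib

section
/- (Rands, case s=1) Let D be a t-(v,k,λ) design with 1 < t ≤ k, and suppose v ≥ 1 + C(k,1)·k·(k−1) = 1 + k²(k−1). If A is a family of blocks of D such that every two blocks in A intersect, then |A| ≤ r (the replication number), and equality holds only if A consists of all blocks through a single point. -/
lemma rands_dc {β γ : Type*} (s : Finset β) (u : Finset γ) (R : β → γ → Prop)
    [∀ b c, Decidable (R b c)] :
    ∑ b ∈ s, (u.filter (fun c => R b c)).card = ∑ c ∈ u, (s.filter (fun b => R b c)).card := by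
  simp only [Finset.card_filter]
  exact Finset.sum_comm

/-- Rands, case s = 1: in a t-(v,k,λ) design with 1 < t ≤ k and
v ≥ 1 + k²(k−1), any pairwise-intersecting family of blocks has size at most r,
with equality only for the family of all blocks through a single point. -/
theorem rands_s_one {α : Type*} [Fintype α] [DecidableEq α]
    (v k t lam r : ℕ) (B : Finset (Finset α))
    (hv : Fintype.card α = v)
    (ht : 1 < t) (htk : t ≤ k)
    (hk : ∀ b ∈ B, b.card = k)
    (hl : ∀ T : Finset α, T.card = t → (B.filter (fun b => T ⊆ b)).card = lam)
    (hr : ∀ x : α, (B.filter (fun b => x ∈ b)).card = r)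
    (hbig : v ≥ 1 + k ^ 2 * (k - 1))
    (A : Finset (Finset α)) (hA : A ⊆ B)
    (hint : ∀ a ∈ A, ∀ b ∈ A, (a ∩ b).Nonempty) :
    A.card ≤ r ∧ (A.card = r → ∃ x : α, A = B.filter (fun b => x ∈ b)) := by
  have hk2 : 2 ≤ k := le_trans ht htk
  have hv5 : 5 ≤ v := by
    have h1 : 4 ≤ k ^ 2 := by nlinarith
    have h2 : 1 ≤ k - 1 := by omega
    have := Nat.mul_le_mul h1 h2
    omega
  have hcard : 1 < Fintype.card α := by omega
  -- pair counting
  have hpair_eq : ∀ x y : α, x ≠ y →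
      (B.filter (fun b => x ∈ b ∧ y ∈ b)).card * (k-2).choose (t-2)
        = lam * (v-2).choose (t-2) := by
    intro x y hxy
    set S : Finset α := {x, y} with hS
    have hScard : S.card = 2 := by
      rw [hS, Finset.card_insert_of_notMem (by simp [hxy]), Finset.card_singleton]
    have hfe : B.filter (fun b => x ∈ b ∧ y ∈ b) = B.filter (fun b => S ⊆ b) := by
      apply Finset.filter_congr; intro b _
      simp [hS, Finset.insert_subset_iff, Finset.singleton_subset_iff]
    rw [hfe]
    set Bs := B.filter (fun b => S ⊆ b) with hBs
    set P := (Finset.univ \ S).powersetCard (t-2) with hP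
    have key := rands_dc Bs P (fun b U => U ⊆ b)
    have hL : ∀ b ∈ Bs, (P.filter (fun U => U ⊆ b)).card = (k-2).choose (t-2) := by
      intro b hb
      have hbB : b ∈ B := (Finset.mem_filter.mp hb).1
      have hSb : S ⊆ b := (Finset.mem_filter.mp hb).2
      have heq : P.filter (fun U => U ⊆ b) = (b \ S).powersetCard (t-2) := by
        ext U
        simp only [hP, Finset.mem_filter, Finset.mem_powersetCard, Finset.subset_sdiff]
        constructor
        · rintro ⟨⟨⟨_, hdisj⟩, hc⟩, hUb⟩; exact ⟨⟨hUb, hdisj⟩, hc⟩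
        · rintro ⟨⟨hUb, hdisj⟩, hc⟩; exact ⟨⟨⟨Finset.subset_univ _, hdisj⟩, hc⟩, hUb⟩
      rw [heq, Finset.card_powersetCard, Finset.card_sdiff_of_subset hSb, hk b hbB, hScard]
    have hR : ∀ U ∈ P, (Bs.filter (fun b => U ⊆ b)).card = lam := by
      intro U hU
      obtain ⟨hUsub, hUcard⟩ := Finset.mem_powersetCard.mp hU
      obtain ⟨_, hdisj⟩ := Finset.subset_sdiff.mp hUsub
      have heq : Bs.filter (fun b => U ⊆ b) = B.filter (fun b => S ∪ U ⊆ b) := by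
        rw [hBs, Finset.filter_filter]
        apply Finset.filter_congr; intro b _
        simp only [Finset.union_subset_iff]
      rw [heq]
      apply hl
      rw [Finset.card_union_of_disjoint hdisj.symm, hScard, hUcard]; omega
    have hPcard : P.card = (v-2).choose (t-2) := by
      rw [hP, Finset.card_powersetCard, Finset.card_sdiff_of_subset (Finset.subset_univ _),
        Finset.card_univ, hv, hScard]
    calc Bs.card * (k-2).choose (t-2) = ∑ b ∈ Bs, (P.filter (fun U => U ⊆ b)).card := by
          rw [Finset.sum_congr rfl hL, Finset.sum_const, smul_eq_mul]
      _ = ∑ U ∈ P, (Bs.filter (fun b => U ⊆ b)).card := key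
      _ = lam * (v-2).choose (t-2) := by
          rw [Finset.sum_congr rfl hR, Finset.sum_const, smul_eq_mul, hPcard, mul_comm]
  obtain ⟨x0, y0, hx0y0⟩ := Fintype.exists_pair_of_one_lt_card hcard
  set lam2 := (B.filter (fun b => x0 ∈ b ∧ y0 ∈ b)).card with hlam2
  have hc1 : 0 < (k-2).choose (t-2) := Nat.choose_pos (by omega)
  have hpair : ∀ x y : α, x ≠ y → (B.filter (fun b => x ∈ b ∧ y ∈ b)).card = lam2 := by
    intro x y hxy
    exact Nat.eq_of_mul_eq_mul_right hc1 ((hpair_eq x y hxy).trans (hpair_eq x0 y0 hx0y0).symm)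
  -- r relation
  have hrrel : r * (k-1) = (v-1) * lam2 := by
    have key := rands_dc (B.filter (fun b => x0 ∈ b)) (Finset.univ.erase x0)
      (fun b y => y ∈ b)
    have hL : ∀ b ∈ B.filter (fun b => x0 ∈ b),
        ((Finset.univ.erase x0).filter (fun y => y ∈ b)).card = k - 1 := by
      intro b hb
      obtain ⟨hbB, hx0b⟩ := Finset.mem_filter.mp hb
      have : (Finset.univ.erase x0).filter (fun y => y ∈ b) = b.erase x0 := by
        ext z; simp [Finset.mem_erase, and_comm]
      rw [this, Finset.card_erase_of_mem hx0b, hk b hbB]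
    have hR : ∀ y ∈ Finset.univ.erase x0,
        ((B.filter (fun b => x0 ∈ b)).filter (fun b => y ∈ b)).card = lam2 := by
      intro y hy
      have hyx : y ≠ x0 := (Finset.mem_erase.mp hy).1
      rw [Finset.filter_filter]
      exact hpair x0 y hyx.symm
    have h1 : ∑ b ∈ B.filter (fun b => x0 ∈ b),
        ((Finset.univ.erase x0).filter (fun y => y ∈ b)).card = r * (k-1) := by
      rw [Finset.sum_congr rfl hL, Finset.sum_const, smul_eq_mul, hr x0]
    have h2 : ∑ y ∈ Finset.univ.erase x0,
        ((B.filter (fun b => x0 ∈ b)).filter (fun b => y ∈ b)).card = (v-1) * lam2 := by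
      rw [Finset.sum_congr rfl hR, Finset.sum_const, smul_eq_mul,
        Finset.card_erase_of_mem (Finset.mem_univ _), Finset.card_univ, hv]
    rw [← h1, key, h2]
  have hrge : k ^ 2 * lam2 ≤ r := by
    have h1 : k ^ 2 * lam2 * (k - 1) ≤ r * (k - 1) := by
      rw [hrrel]
      calc k ^ 2 * lam2 * (k-1) = (k^2 * (k-1)) * lam2 := by ring
        _ ≤ (v-1) * lam2 := Nat.mul_le_mul_right _ (by omega)
    exact Nat.le_of_mul_le_mul_right h1 (by omega)
  by_cases hstar : ∃ x, ∀ a ∈ A, x ∈ a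
  · obtain ⟨x, hx⟩ := hstar
    have hsub : A ⊆ B.filter (fun b => x ∈ b) := by
      intro a ha; exact Finset.mem_filter.mpr ⟨hA ha, hx a ha⟩
    have hle : A.card ≤ r := by rw [← hr x]; exact Finset.card_le_card hsub
    refine ⟨hle, fun heq => ⟨x, Finset.eq_of_subset_of_card_le hsub (by rw [hr x, heq])⟩⟩
  · push_neg at hstar
    have hne : A.Nonempty := by
      rcases Finset.eq_empty_or_nonempty A with h | h
      · exfalso
        have : Nonempty α := Fintype.card_pos_iff.mp (by omega)
        obtain ⟨a, ha, _⟩ := hstar this.some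
        simp [h] at ha
      · exact h
    obtain ⟨b0, hb0⟩ := hne
    have hb0B : b0 ∈ B := hA hb0
    have hb0k : b0.card = k := hk b0 hb0B
    -- each A_x is small
    have hxb : ∀ x ∈ b0, (A.filter (fun a => x ∈ a)).card ≤ k * lam2 := by
      intro x hx
      obtain ⟨ax, haxA, hxax⟩ := hstar x
      have hsub : A.filter (fun a => x ∈ a) ⊆
          ax.biUnion (fun y => B.filter (fun b => x ∈ b ∧ y ∈ b)) := by
        intro a ha
        obtain ⟨haA, hxa⟩ := Finset.mem_filter.mp ha
        obtain ⟨y, hy⟩ := hint a haA ax haxA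
        obtain ⟨hya, hyax⟩ := Finset.mem_inter.mp hy
        exact Finset.mem_biUnion.mpr ⟨y, hyax, Finset.mem_filter.mpr ⟨hA haA, hxa, hya⟩⟩
      calc (A.filter (fun a => x ∈ a)).card
          ≤ (ax.biUnion (fun y => B.filter (fun b => x ∈ b ∧ y ∈ b))).card :=
            Finset.card_le_card hsub
        _ ≤ ∑ y ∈ ax, (B.filter (fun b => x ∈ b ∧ y ∈ b)).card := Finset.card_biUnion_le
        _ = ∑ y ∈ ax, lam2 := by
            refine Finset.sum_congr rfl fun y hy => hpair x y fun h => hxax (h ▸ hy)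
        _ = k * lam2 := by rw [Finset.sum_const, smul_eq_mul, hk ax (hA haxA)]
    have key := rands_dc A b0 (fun a z => z ∈ a)
    have hlow : A.card - 1 + k ≤ ∑ a ∈ A, (b0.filter (fun z => z ∈ a)).card := by
      rw [← Finset.add_sum_erase A _ hb0]
      have h1 : (b0.filter (fun z => z ∈ b0)).card = k := by
        rw [Finset.filter_true_of_mem (fun z hz => hz), hb0k]
      have h2 : (A.erase b0).card ≤ ∑ a ∈ A.erase b0, (b0.filter (fun z => z ∈ a)).card := by
        refine Finset.card_nsmul_le_sum _ _ 1 ?_ |>.trans_eq' (by simp)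
        intro a ha
        have haA : a ∈ A := Finset.mem_of_mem_erase ha
        obtain ⟨y, hy⟩ := hint a haA b0 hb0
        obtain ⟨hya, hyb0⟩ := Finset.mem_inter.mp hy
        exact Finset.card_pos.mpr ⟨y, Finset.mem_filter.mpr ⟨hyb0, hya⟩⟩
      rw [Finset.card_erase_of_mem hb0] at h2
      omega
    have hupp : ∑ x ∈ b0, (A.filter (fun a => x ∈ a)).card ≤ k ^ 2 * lam2 := by
      calc ∑ x ∈ b0, (A.filter (fun a => x ∈ a)).card ≤ ∑ _x ∈ b0, k * lam2 :=
            Finset.sum_le_sum hxb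
        _ = k ^ 2 * lam2 := by rw [Finset.sum_const, smul_eq_mul, hb0k]; ring
    have hAcard : 1 ≤ A.card := Finset.card_pos.mpr ⟨b0, hb0⟩
    have hfinal : A.card + (k - 1) ≤ r := by
      have h := hlow.trans (key.le.trans hupp)
      omega
    constructor
    · omega
    · intro h; omega
end

section
/- The line graph of a 2-(v,k,1) design with v > k(k−1)+1 is strongly regular: it is regular, every pair of adjacent vertices has the same number of common neighbors, and every pair of non-adjacent vertices has the same number of common neighbors. -/
/-- The line graph of a family of blocks: vertices are blocks, two distinct
blocks adjacent iff they share a point. -/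
def lineGraph {α : Type*} [DecidableEq α] (B : Finset (Finset α)) :
    SimpleGraph {b // b ∈ B} where
  Adj a b := a ≠ b ∧ (a.1 ∩ b.1).Nonempty
  symm := ⟨fun a b h => ⟨h.1.symm, by rw [Finset.inter_comm]; exact h.2⟩⟩
  loopless := ⟨fun a h => h.1 rfl⟩


section Aux
variable {α : Type*} [Fintype α] [DecidableEq α]

lemma uniq_block (B : Finset (Finset α))
    (hl : ∀ x y : α, x ≠ y → (B.filter (fun b => x ∈ b ∧ y ∈ b)).card = 1)
    {x y : α} (hxy : x ≠ y) {a b : Finset α} (ha : a ∈ B) (hb : b ∈ B)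
    (hxa : x ∈ a) (hya : y ∈ a) (hxb : x ∈ b) (hyb : y ∈ b) : a = b := by
  have h := Finset.card_le_one.mp (hl x y hxy).le
  exact h a (by simp [Finset.mem_filter, ha, hxa, hya]) b
    (by simp [Finset.mem_filter, hb, hxb, hyb])

lemma exists_block (B : Finset (Finset α))
    (hl : ∀ x y : α, x ≠ y → (B.filter (fun b => x ∈ b ∧ y ∈ b)).card = 1)
    {x y : α} (hxy : x ≠ y) : ∃ b ∈ B, x ∈ b ∧ y ∈ b := by
  obtain ⟨b, hb⟩ := Finset.card_eq_one.mp (hl x y hxy)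
  have : b ∈ B.filter (fun b => x ∈ b ∧ y ∈ b) := hb ▸ Finset.mem_singleton_self b
  rw [Finset.mem_filter] at this
  exact ⟨b, this.1, this.2⟩

lemma inter_eq_singleton (B : Finset (Finset α))
    (hl : ∀ x y : α, x ≠ y → (B.filter (fun b => x ∈ b ∧ y ∈ b)).card = 1)
    {a b : Finset α} (ha : a ∈ B) (hb : b ∈ B) (hab : a ≠ b)
    {x : α} (hx : x ∈ a ∩ b) : a ∩ b = {x} := by
  rw [Finset.eq_singleton_iff_unique_mem]
  refine ⟨hx, fun y hy => ?_⟩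
  by_contra hne
  rw [Finset.mem_inter] at hx hy
  exact hab (uniq_block B hl hne ha hb hy.1 hx.1 hy.2 hx.2)

/-- replication number: every point lies in r blocks where r*(k-1) = v-1 -/
lemma repl (v k : ℕ) (B : Finset (Finset α))
    (hv : Fintype.card α = v)
    (hk : ∀ b ∈ B, b.card = k)
    (hl : ∀ x y : α, x ≠ y → (B.filter (fun b => x ∈ b ∧ y ∈ b)).card = 1)
    (x : α) : (B.filter (fun b => x ∈ b)).card * (k - 1) = v - 1 := by
  classical
  set F := B.filter (fun b => x ∈ b) with hF
  set P : Finset (Finset α × α) := F.biUnion (fun b => {b} ×ˢ b.erase x) with hP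
  have hmem : ∀ p : Finset α × α, p ∈ P ↔ p.1 ∈ F ∧ p.2 ∈ p.1.erase x := by
    intro p
    simp only [hP, Finset.mem_biUnion, Finset.mem_product, Finset.mem_singleton]
    constructor
    · rintro ⟨b, hb, rfl, h2⟩; exact ⟨hb, h2⟩
    · rintro ⟨h1, h2⟩; exact ⟨p.1, h1, rfl, h2⟩
  have hcard1 : P.card = F.card * (k - 1) := by
    rw [hP, Finset.card_biUnion]
    · rw [Finset.sum_congr rfl (fun b hb => ?_), Finset.sum_const, smul_eq_mul]
      rw [Finset.card_product, Finset.card_singleton, one_mul]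
      rw [Finset.mem_filter] at hb
      rw [Finset.card_erase_of_mem hb.2, hk b hb.1]
    · intro b hb c hc hbc
      simp only [Finset.disjoint_left, Finset.mem_product, Finset.mem_singleton]
      rintro p ⟨rfl, -⟩ ⟨h, -⟩
      exact hbc h
  have hcard2 : P.card = v - 1 := by
    rw [Finset.card_eq_sum_card_fiberwise (f := Prod.snd) (t := Finset.univ.erase x)
      (fun p hp => ?_)]
    · rw [Finset.sum_congr rfl (fun y hy => ?_), Finset.sum_const, smul_eq_mul, mul_one]
      · rw [Finset.card_erase_of_mem (Finset.mem_univ x), Finset.card_univ, hv]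
      · -- fiber over y has card 1
        rw [Finset.mem_erase] at hy
        rw [← hl x y (Ne.symm hy.1)]
        apply Finset.card_bij (fun p _ => p.1)
        · intro p hp
          rw [Finset.mem_filter] at hp
          have := (hmem p).mp hp.1
          rw [Finset.mem_filter] at this
          rw [Finset.mem_filter]
          refine ⟨this.1.1, this.1.2, ?_⟩
          have := this.2
          rw [hp.2] at this
          exact (Finset.mem_erase.mp this).2
        · intro p hp q hq h
          rw [Finset.mem_filter] at hp hq
          exact Prod.ext h (hp.2.trans hq.2.symm)
        · intro b hb
          rw [Finset.mem_filter] at hb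
          refine ⟨(b, y), ?_, rfl⟩
          rw [Finset.mem_filter]
          refine ⟨(hmem (b, y)).mpr ⟨?_, ?_⟩, rfl⟩
          · rw [Finset.mem_filter]; exact ⟨hb.1, hb.2.1⟩
          · exact Finset.mem_erase.mpr ⟨hy.1, hb.2.2⟩
    · have := (hmem p).mp hp
      exact Finset.mem_erase.mpr ⟨(Finset.mem_erase.mp this.2).1, Finset.mem_univ _⟩
  omega

end Aux

section Aux2
variable {α : Type*} [Fintype α] [DecidableEq α]

lemma deg_count (k : ℕ) (B : Finset (Finset α))
    (hk : ∀ b ∈ B, b.card = k)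
    (hl : ∀ x y : α, x ≠ y → (B.filter (fun b => x ∈ b ∧ y ∈ b)).card = 1)
    {a : Finset α} (ha : a ∈ B) (R : ℕ)
    (hR : ∀ x : α, (B.filter (fun b => x ∈ b)).card = R) :
    (B.filter (fun c => c ≠ a ∧ (a ∩ c).Nonempty)).card = k * (R - 1) := by
  classical
  have hsplit : B.filter (fun c => c ≠ a ∧ (a ∩ c).Nonempty)
      = a.biUnion (fun x => B.filter (fun c => c ≠ a ∧ x ∈ c)) := by
    ext c
    simp only [Finset.mem_filter, Finset.mem_biUnion]
    constructor
    · rintro ⟨hc, hne, y, hy⟩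
      rw [Finset.mem_inter] at hy
      exact ⟨y, hy.1, hc, hne, hy.2⟩
    · rintro ⟨y, hya, hc, hne, hyc⟩
      exact ⟨hc, hne, y, Finset.mem_inter.mpr ⟨hya, hyc⟩⟩
  rw [hsplit, Finset.card_biUnion]
  · rw [Finset.sum_congr rfl (fun x hx => ?_), Finset.sum_const, smul_eq_mul, hk a ha]
    have : B.filter (fun c => c ≠ a ∧ x ∈ c) = (B.filter (fun c => x ∈ c)).erase a := by
      ext c
      simp only [Finset.mem_filter, Finset.mem_erase]
      tauto
    rw [this, Finset.card_erase_of_mem (Finset.mem_filter.mpr ⟨ha, hx⟩), hR x]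
  · intro x hx y hy hxy
    simp only [Finset.disjoint_left, Finset.mem_filter]
    rintro c ⟨hc, hne, hxc⟩ ⟨-, -, hyc⟩
    exact hne (uniq_block B hl hxy hc ha hxc hyc hx hy)

/-- the chosen-block function -/
lemma blk_exists (B : Finset (Finset α))
    (hl : ∀ x y : α, x ≠ y → (B.filter (fun b => x ∈ b ∧ y ∈ b)).card = 1) :
    ∃ f : α → α → Finset α, ∀ y z : α, y ≠ z → f y z ∈ B ∧ y ∈ f y z ∧ z ∈ f y z := by
  classical
  refine ⟨fun y z => if h : y ≠ z then (exists_block B hl h).choose else ∅, fun y z h => ?_⟩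
  simp only [dif_pos h]
  obtain ⟨h1, h2, h3⟩ := (exists_block B hl h).choose_spec
  exact ⟨h1, h2, h3⟩

lemma pair_count (B : Finset (Finset α))
    (hl : ∀ x y : α, x ≠ y → (B.filter (fun b => x ∈ b ∧ y ∈ b)).card = 1)
    {a b : Finset α} (ha : a ∈ B) (hb : b ∈ B)
    (B' : Finset (Finset α)) (hB' : B' ⊆ B)
    (s t : Finset α) (hsa : s ⊆ a) (htb : t ⊆ b)
    (hdisj : ∀ y ∈ s, ∀ z ∈ t, y ≠ z)
    (hgood : ∀ c ∈ B', c ≠ a → c ≠ b → (a ∩ c).Nonempty → (b ∩ c).Nonempty →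
      ((a ∩ c) ⊆ s ∧ (b ∩ c) ⊆ t))
    (hclose : ∀ y ∈ s, ∀ z ∈ t, ∀ c ∈ B, y ∈ c → z ∈ c → c ∈ B' ∧ c ≠ a ∧ c ≠ b) :
    (B'.filter (fun c => c ≠ a ∧ c ≠ b ∧ (a ∩ c).Nonempty ∧ (b ∩ c).Nonempty)).card
      = s.card * t.card := by
  classical
  obtain ⟨blk, hblk⟩ := blk_exists B hl
  rw [← Finset.card_product]
  symm
  apply Finset.card_bij (fun p _ => blk p.1 p.2)
  · -- maps into the filter
    rintro ⟨y, z⟩ hp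
    rw [Finset.mem_product] at hp
    have hyz : y ≠ z := hdisj y hp.1 z hp.2
    obtain ⟨hc1, hc2, hc3⟩ := hblk y z hyz
    have hcab := hclose y hp.1 z hp.2 _ hc1 hc2 hc3
    rw [Finset.mem_filter]
    exact ⟨hcab.1, hcab.2.1, hcab.2.2, ⟨y, Finset.mem_inter.mpr ⟨hsa hp.1, hc2⟩⟩,
      ⟨z, Finset.mem_inter.mpr ⟨htb hp.2, hc3⟩⟩⟩
  · -- injective
    rintro ⟨y, z⟩ hp ⟨y', z'⟩ hq h
    rw [Finset.mem_product] at hp hq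
    have hyz : y ≠ z := hdisj y hp.1 z hp.2
    have hyz' : y' ≠ z' := hdisj y' hq.1 z' hq.2
    obtain ⟨hc1, hc2, hc3⟩ := hblk y z hyz
    obtain ⟨hd1, hd2, hd3⟩ := hblk y' z' hyz'
    rw [h] at hc1 hc2 hc3
    have hcab := hclose y' hq.1 z' hq.2 _ hd1 hd2 hd3
    have hac : (a ∩ blk y' z').card ≤ 1 := by
      by_contra hcard
      have h2 : 1 < (a ∩ blk y' z').card := by omega
      obtain ⟨u, hu, w, hw, huw⟩ := Finset.one_lt_card.mp h2
      rw [Finset.mem_inter] at hu hw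
      exact hcab.2.1 (uniq_block B hl huw hd1 ha hu.2 hw.2 hu.1 hw.1)
    have hbc : (b ∩ blk y' z').card ≤ 1 := by
      by_contra hcard
      have h2 : 1 < (b ∩ blk y' z').card := by omega
      obtain ⟨u, hu, w, hw, huw⟩ := Finset.one_lt_card.mp h2
      rw [Finset.mem_inter] at hu hw
      exact hcab.2.2 (uniq_block B hl huw hd1 hb hu.2 hw.2 hu.1 hw.1)
    have h1 : y = y' := by
      have hy : y ∈ a ∩ blk y' z' := Finset.mem_inter.mpr ⟨hsa hp.1, hc2⟩
      have hy' : y' ∈ a ∩ blk y' z' := Finset.mem_inter.mpr ⟨hsa hq.1, hd2⟩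
      exact Finset.card_le_one.mp hac y hy y' hy'
    have h2 : z = z' := by
      have hz : z ∈ b ∩ blk y' z' := Finset.mem_inter.mpr ⟨htb hp.2, hc3⟩
      have hz' : z' ∈ b ∩ blk y' z' := Finset.mem_inter.mpr ⟨htb hq.2, hd3⟩
      exact Finset.card_le_one.mp hbc z hz z' hz'
    simp [h1, h2]
  · -- surjective
    intro c hc
    rw [Finset.mem_filter] at hc
    obtain ⟨hcB', hca, hcb, hne1, hne2⟩ := hc
    have hcB : c ∈ B := hB' hcB'
    obtain ⟨y, hy⟩ := hne1
    obtain ⟨z, hz⟩ := hne2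
    have hsub := hgood c hcB' hca hcb ⟨y, hy⟩ ⟨z, hz⟩
    have hys : y ∈ s := hsub.1 hy
    have hzt : z ∈ t := hsub.2 hz
    have hyz : y ≠ z := hdisj y hys z hzt
    obtain ⟨hd1, hd2, hd3⟩ := hblk y z hyz
    rw [Finset.mem_inter] at hy hz
    refine ⟨(y, z), Finset.mem_product.mpr ⟨hys, hzt⟩, ?_⟩
    exact uniq_block B hl hyz hd1 hcB hd2 hd3 hy.2 hz.2

lemma lam_count (k : ℕ) (B : Finset (Finset α))
    (hk : ∀ b ∈ B, b.card = k)
    (hl : ∀ x y : α, x ≠ y → (B.filter (fun b => x ∈ b ∧ y ∈ b)).card = 1)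
    {a b : Finset α} (ha : a ∈ B) (hb : b ∈ B) (hab : a ≠ b)
    {x : α} (hx : a ∩ b = {x}) (R : ℕ)
    (hR : ∀ y : α, (B.filter (fun c => y ∈ c)).card = R) :
    (B.filter (fun c => c ≠ a ∧ c ≠ b ∧ (a ∩ c).Nonempty ∧ (b ∩ c).Nonempty)).card
      = (R - 2) + (k - 1) * (k - 1) := by
  classical
  have hxab : x ∈ a ∩ b := hx ▸ Finset.mem_singleton_self x
  rw [Finset.mem_inter] at hxab
  obtain ⟨hxa, hxb⟩ := hxab
  have hmemx : ∀ y, y ∈ a → y ∈ b → y = x := by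
    intro y h1 h2
    have : y ∈ a ∩ b := Finset.mem_inter.mpr ⟨h1, h2⟩
    rw [hx] at this; exact Finset.mem_singleton.mp this
  have hsplit := Finset.card_filter_add_card_filter_not
    (s := B.filter (fun c => c ≠ a ∧ c ≠ b ∧ (a ∩ c).Nonempty ∧ (b ∩ c).Nonempty))
    (p := fun c => x ∈ c)
  have h1 : (B.filter (fun c => c ≠ a ∧ c ≠ b ∧ (a ∩ c).Nonempty ∧ (b ∩ c).Nonempty)).filter
      (fun c => x ∈ c) = ((B.filter (fun c => x ∈ c)).erase a).erase b := by
    ext c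
    simp only [Finset.mem_filter, Finset.mem_erase]
    constructor
    · rintro ⟨⟨hcB, hca, hcb, -, -⟩, hxc⟩; exact ⟨hcb, hca, hcB, hxc⟩
    · rintro ⟨hcb, hca, hcB, hxc⟩
      exact ⟨⟨hcB, hca, hcb, ⟨x, Finset.mem_inter.mpr ⟨hxa, hxc⟩⟩,
        ⟨x, Finset.mem_inter.mpr ⟨hxb, hxc⟩⟩⟩, hxc⟩
  have hbmem : b ∈ (B.filter (fun c => x ∈ c)).erase a :=
    Finset.mem_erase.mpr ⟨hab.symm, Finset.mem_filter.mpr ⟨hb, hxb⟩⟩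
  have hamem : a ∈ B.filter (fun c => x ∈ c) := Finset.mem_filter.mpr ⟨ha, hxa⟩
  have hc1 : ((B.filter (fun c => c ≠ a ∧ c ≠ b ∧ (a ∩ c).Nonempty ∧ (b ∩ c).Nonempty)).filter
      (fun c => x ∈ c)).card = R - 2 := by
    rw [h1, Finset.card_erase_of_mem hbmem, Finset.card_erase_of_mem hamem, hR x]
    omega
  have h2 : (B.filter (fun c => c ≠ a ∧ c ≠ b ∧ (a ∩ c).Nonempty ∧ (b ∩ c).Nonempty)).filter
      (fun c => ¬ x ∈ c) = (B.filter (fun c => x ∉ c)).filter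
      (fun c => c ≠ a ∧ c ≠ b ∧ (a ∩ c).Nonempty ∧ (b ∩ c).Nonempty) := by
    ext c
    simp only [Finset.mem_filter]
    tauto
  have hc2 : ((B.filter (fun c => c ≠ a ∧ c ≠ b ∧ (a ∩ c).Nonempty ∧ (b ∩ c).Nonempty)).filter
      (fun c => ¬ x ∈ c)).card = (k - 1) * (k - 1) := by
    rw [h2]
    have key := pair_count B hl ha hb (B.filter (fun c => x ∉ c)) (Finset.filter_subset _ _)
      (a.erase x) (b.erase x) (Finset.erase_subset _ _) (Finset.erase_subset _ _)
      ?_ ?_ ?_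
    · rw [key, Finset.card_erase_of_mem hxa, Finset.card_erase_of_mem hxb, hk a ha, hk b hb]
    · -- hdisj
      intro y hy z hz h
      subst h
      rw [Finset.mem_erase] at hy hz
      exact hy.1 (hmemx y hy.2 hz.2)
    · -- hgood
      intro c hc hca hcb h1' h2'
      rw [Finset.mem_filter] at hc
      constructor
      · intro u hu
        rw [Finset.mem_inter] at hu
        exact Finset.mem_erase.mpr ⟨fun h => hc.2 (h ▸ hu.2), hu.1⟩
      · intro u hu
        rw [Finset.mem_inter] at hu
        exact Finset.mem_erase.mpr ⟨fun h => hc.2 (h ▸ hu.2), hu.1⟩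
    · -- hclose
      intro y hy z hz c hcB hyc hzc
      rw [Finset.mem_erase] at hy hz
      have hza : z ∉ a := fun h => hz.1 (hmemx z h hz.2)
      have hyb : y ∉ b := fun h => hy.1 (hmemx y hy.2 h)
      have hca : c ≠ a := fun h => hza (h ▸ hzc)
      have hcb : c ≠ b := fun h => hyb (h ▸ hyc)
      have hxc : x ∉ c := fun hxc =>
        hca (uniq_block B hl hy.1 hcB ha hyc hxc hy.2 hxa)
      exact ⟨Finset.mem_filter.mpr ⟨hcB, hxc⟩, hca, hcb⟩
  omega

lemma mu_count (k : ℕ) (B : Finset (Finset α))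
    (hk : ∀ b ∈ B, b.card = k)
    (hl : ∀ x y : α, x ≠ y → (B.filter (fun b => x ∈ b ∧ y ∈ b)).card = 1)
    {a b : Finset α} (ha : a ∈ B) (hb : b ∈ B)
    (hx : a ∩ b = ∅) :
    (B.filter (fun c => c ≠ a ∧ c ≠ b ∧ (a ∩ c).Nonempty ∧ (b ∩ c).Nonempty)).card
      = k * k := by
  classical
  have hmemx : ∀ y, y ∈ a → y ∈ b → False := by
    intro y h1 h2
    have : y ∈ a ∩ b := Finset.mem_inter.mpr ⟨h1, h2⟩
    rw [hx] at this; exact absurd this (Finset.notMem_empty y)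
  have key := pair_count B hl ha hb B (subset_refl B) a b (subset_refl a) (subset_refl b)
    ?_ ?_ ?_
  · rw [key, hk a ha, hk b hb]
  · intro y hy z hz h
    exact hmemx y hy (h ▸ hz)
  · intro c hc hca hcb h1' h2'
    exact ⟨Finset.inter_subset_left, Finset.inter_subset_left⟩
  · intro y hy z hz c hcB hyc hzc
    have hca : c ≠ a := fun h => hmemx z (h ▸ hzc) hz
    have hcb : c ≠ b := fun h => hmemx y hy (h ▸ hyc)
    exact ⟨hcB, hca, hcb⟩

lemma natcard_filter (B : Finset (Finset α)) (P : {b // b ∈ B} → Prop)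
    (Q : Finset α → Prop) [DecidablePred Q]
    (h : ∀ c : {b // b ∈ B}, P c ↔ Q c.1) :
    Nat.card {c | P c} = (B.filter Q).card := by
  classical
  have e1 : {c : {b // b ∈ B} | P c}
      = ↑(Finset.univ.filter (fun c : {b // b ∈ B} => Q c.1)) := by
    ext c; simp [h c]
  rw [e1, Nat.card_coe_set_eq, Set.ncard_coe_finset]
  apply Finset.card_bij (fun c _ => c.1)
  · intro c hc
    rw [Finset.mem_filter] at hc
    exact Finset.mem_filter.mpr ⟨c.2, hc.2⟩
  · intro c _ d _ hcd
    exact Subtype.ext hcd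
  · intro c hc
    rw [Finset.mem_filter] at hc
    exact ⟨⟨c, hc.1⟩, Finset.mem_filter.mpr ⟨Finset.mem_univ _, hc.2⟩, rfl⟩

end Aux2


/-- the line graph of a 2-(v,k,1) design with v > k(k−1)+1 is
strongly regular. -/
theorem line_graph_strongly_regular {α : Type*} [Fintype α] [DecidableEq α]
    (v k : ℕ) (B : Finset (Finset α))
    (hv : Fintype.card α = v)
    (htk : 2 ≤ k)
    (hk : ∀ b ∈ B, b.card = k)
    (hl : ∀ x y : α, x ≠ y → (B.filter (fun b => x ∈ b ∧ y ∈ b)).card = 1)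
    (hbig : v > k * (k - 1) + 1) :
    ∃ d l m : ℕ,
      (∀ a : {b // b ∈ B}, Nat.card {c | (lineGraph B).Adj a c} = d) ∧
      (∀ a b : {b // b ∈ B}, (lineGraph B).Adj a b →
        Nat.card {c | (lineGraph B).Adj a c ∧ (lineGraph B).Adj b c} = l) ∧
      (∀ a b : {b // b ∈ B}, a ≠ b → ¬ (lineGraph B).Adj a b →
        Nat.card {c | (lineGraph B).Adj a c ∧ (lineGraph B).Adj b c} = m) := by
  classical
  have adj_iff : ∀ a c : {b // b ∈ B}, (lineGraph B).Adj a c ↔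
      (c.1 ≠ a.1 ∧ (a.1 ∩ c.1).Nonempty) := by
    intro a c
    show (a ≠ c ∧ (a.1 ∩ c.1).Nonempty) ↔ _
    constructor
    · rintro ⟨h1, h2⟩
      exact ⟨fun h => h1 (Subtype.ext h.symm), h2⟩
    · rintro ⟨h1, h2⟩
      exact ⟨fun h => h1 (congrArg Subtype.val h).symm, h2⟩
  have hα : Nonempty α := by
    rw [← Fintype.card_pos_iff, hv]; omega
  obtain ⟨x₀⟩ := hα
  have hR : ∀ x : α, (B.filter (fun b => x ∈ b)).card = (B.filter (fun b => x₀ ∈ b)).card := by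
    intro x
    have h1 := repl v k B hv hk hl x
    have h2 := repl v k B hv hk hl x₀
    have hk1 : 0 < k - 1 := by omega
    apply Nat.eq_of_mul_eq_mul_right hk1
    omega
  set R := (B.filter (fun b => x₀ ∈ b)).card with hRdef
  refine ⟨k * (R - 1), (R - 2) + (k - 1) * (k - 1), k * k, ?_, ?_, ?_⟩
  · intro a
    refine (natcard_filter B _ (fun c => c ≠ a.1 ∧ (a.1 ∩ c).Nonempty) (fun c => ?_)).trans
      (deg_count k B hk hl a.2 R hR)
    exact adj_iff a c
  · intro a b hab
    obtain ⟨hne, hint⟩ := (adj_iff a b).mp hab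
    obtain ⟨x, hxmem⟩ := hint
    have hab1 : a.1 ≠ b.1 := hne.symm
    have hx := inter_eq_singleton B hl a.2 b.2 hab1 hxmem
    refine (natcard_filter B _
      (fun c => c ≠ a.1 ∧ c ≠ b.1 ∧ (a.1 ∩ c).Nonempty ∧ (b.1 ∩ c).Nonempty)
      (fun c => ?_)).trans (lam_count k B hk hl a.2 b.2 hab1 hx R hR)
    rw [adj_iff a c, adj_iff b c]
    tauto
  · intro a b hab hnadj
    have hab1 : a.1 ≠ b.1 := fun h => hab (Subtype.ext h)
    have hempty : a.1 ∩ b.1 = ∅ := by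
      rw [← Finset.not_nonempty_iff_eq_empty]
      intro hne
      exact hnadj ((adj_iff a b).mpr ⟨Ne.symm hab1, hne⟩)
    refine (natcard_filter B _
      (fun c => c ≠ a.1 ∧ c ≠ b.1 ∧ (a.1 ∩ c).Nonempty ∧ (b.1 ∩ c).Nonempty)
      (fun c => ?_)).trans (mu_count k B hk hl a.2 b.2 hempty)
    rw [adj_iff a c, adj_iff b c]
    tauto
end
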